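/- Let R be an algebraic curvature tensor on (V,J), η a quasi-Kähler torsion-type tensor on (V,J), and D : V×V → End(V) a bilinear map such that each D(x,y) is skew-symmetric and anticommutes with J, satisfying R(x,y,z,u) − R(x,y,Jz,Ju) = 2⟨D(x,y)z,u⟩ and the symmetry ⟨D(x,y)z,u⟩ = ⟨D(z,u)x,y⟩ for all x,y,z,u ∈ V. Define R̄(x,y,z,u) := R(x,y,z,u) + ⟨[η_x, η_y]z, u⟩ − ⟨D(x,y)z, u⟩. Then for all x,y,z,u ∈ V: (i) R̄(x,y,z,u) − R̄(z,u,x,y) = ⟨[η_x, η_y]z, u⟩ − ⟨[η_z, η_u]x, y⟩; (ii) R̄(Jx,Jy,z,u) = R̄(x,y,z,u). (This is the algebraic form of Corollary 3.1 for quasi-Kähler manifolds in the class AH₃, R̄ being the curvature of the first canonical Hermitian connection.) -/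
import Mathlib


open scoped InnerProductSpace

/-- Algebraic form of Corollary 3.1. With
`R̄ x y z u = R x y z u + ⟪[η_x, η_y] z, u⟫ - ⟪D x y z, u⟫`, one has
(i) `R̄ x y z u - R̄ z u x y = ⟪[η_x, η_y] z, u⟫ - ⟪[η_z, η_u] x, y⟫` and
(ii) `R̄ (J x) (J y) z u = R̄ x y z u`. -/
theorem hermitian_curvature_symmetries
    {V : Type*} [NormedAddCommGroup V] [InnerProductSpace ℝ V] [FiniteDimensional ℝ V]
    (J : V →ₗ[ℝ] V)
    (hJiso : ∀ x y : V, ⟪J x, J y⟫_ℝ = ⟪x, y⟫_ℝ)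
    (hJJ : ∀ x : V, J (J x) = -x)
    (R : V →ₗ[ℝ] V →ₗ[ℝ] V →ₗ[ℝ] V →ₗ[ℝ] ℝ)
    (hR12 : ∀ x y z u : V, R x y z u = -R y x z u)
    (hR34 : ∀ x y z u : V, R x y z u = -R x y u z)
    (hRpair : ∀ x y z u : V, R x y z u = R z u x y)
    (hBianchi : ∀ x y z u : V, R x y z u + R y z x u + R z x y u = 0)
    (η : V →ₗ[ℝ] V →ₗ[ℝ] V)
    (hskew : ∀ x y z : V, ⟪η x y, z⟫_ℝ = -⟪y, η x z⟫_ℝ)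
    (hanti : ∀ x y : V, η x (J y) = -J (η x y))
    (hQK : ∀ x y : V, η (J x) (J y) = -η x y)
    (D : V →ₗ[ℝ] V →ₗ[ℝ] V →ₗ[ℝ] V)
    (hDskew : ∀ x y z u : V, ⟪D x y z, u⟫_ℝ = -⟪z, D x y u⟫_ℝ)
    (hDanti : ∀ x y z : V, D x y (J z) = -J (D x y z))
    (hRD : ∀ x y z u : V, R x y z u - R x y (J z) (J u) = 2 * ⟪D x y z, u⟫_ℝ)
    (hDsym : ∀ x y z u : V, ⟪D x y z, u⟫_ℝ = ⟪D z u x, y⟫_ℝ)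
    (Rbar : V → V → V → V → ℝ)
    (hRbar : ∀ x y z u : V,
      Rbar x y z u = R x y z u + ⟪η x (η y z) - η y (η x z), u⟫_ℝ - ⟪D x y z, u⟫_ℝ) :
    (∀ x y z u : V,
      Rbar x y z u - Rbar z u x y =
        ⟪η x (η y z) - η y (η x z), u⟫_ℝ - ⟪η z (η u x) - η u (η z x), y⟫_ℝ) ∧
    (∀ x y z u : V, Rbar (J x) (J y) z u = Rbar x y z u) := by
  have hη : ∀ x w : V, η (J x) w = η x (J w) := by
    intro x w
    have h1 := hQK x (J w)
    rw [hJJ, map_neg, neg_inj] at h1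
    exact h1
  have hJη : ∀ x w : V, J (η x (J w)) = η x w := by
    intro x w
    have h1 := hanti x (J w)
    rw [hJJ, map_neg] at h1
    exact (neg_inj.mp h1).symm
  have hcomm : ∀ x y z : V, η (J x) (η (J y) z) = η x (η y z) := by
    intro x y z
    rw [hη, hη y z, hJη]
  have hD : ∀ x y z u : V, ⟪D (J x) (J y) z, u⟫_ℝ = -⟪D x y z, u⟫_ℝ := by
    intro x y z u
    have h1 := hRD z u (J x) (J y)
    rw [hJJ x, hJJ y] at h1
    simp only [map_neg, LinearMap.neg_apply, neg_neg] at h1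
    have h2 := hRD z u x y
    rw [hDsym (J x) (J y) z u, hDsym x y z u]
    linarith
  have hRJ : ∀ x y z u : V, R (J x) (J y) z u = R x y z u - 2 * ⟪D x y z, u⟫_ℝ := by
    intro x y z u
    rw [hRpair (J x) (J y) z u, hRpair x y z u, hDsym x y z u]
    linarith [hRD z u x y]
  constructor
  · intro x y z u
    rw [hRbar, hRbar, hRpair x y z u, hDsym x y z u]
    ring
  · intro x y z u
    have hc : η (J x) (η (J y) z) - η (J y) (η (J x) z) = η x (η y z) - η y (η x z) := by
      rw [hcomm, hcomm]
    rw [hRbar, hRbar, hc, hRJ, hD]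
    ring
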